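/- A function which is both semiconcave and semiconvex is C^{1,1}: let E be a finite-dimensional real inner product space, C ≥ 0, and u : E → ℝ a function which is both C-semiconcave and C-semiconvex (i.e. x ↦ u(x) − (C/2)‖x‖² is concave and x ↦ u(x) + (C/2)‖x‖² is convex on E). Then u is differentiable at every point of E and the derivative map x ↦ Du(x) is C-Lipschitz. -/

import Mathlib

open InnerProductSpace Set
open scoped RealInnerProductSpace

/-- A function `u : E → ℝ` is `C`-semiconcave if `x ↦ u x − (C/2)‖x‖²` is concave. -/
def Semiconcave {E : Type*} [NormedAddCommGroup E] [InnerProductSpace ℝ E]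
    (C : ℝ) (u : E → ℝ) : Prop :=
  ConcaveOn ℝ Set.univ (fun x => u x - (C / 2) * ‖x‖ ^ 2)

/-- A function `u : E → ℝ` is `C`-semiconvex if `−u` is `C`-semiconcave, i.e.
`x ↦ u x + (C/2)‖x‖²` is convex. -/
def Semiconvex {E : Type*} [NormedAddCommGroup E] [InnerProductSpace ℝ E]
    (C : ℝ) (u : E → ℝ) : Prop :=
  Semiconcave C (fun x => -u x)

section Aux

variable {E : Type*} [NormedAddCommGroup E] [InnerProductSpace ℝ E]

section FinDim
variable [FiniteDimensional ℝ E]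

/-- Subgradient existence for convex functions on finite-dimensional inner product spaces. -/
lemma exists_subgradient' (g : E → ℝ) (hg : ConvexOn ℝ Set.univ g) (x : E) :
    ∃ v : E, ∀ z, g x + ⟪v, z - x⟫_ℝ ≤ g z := by
  have hcont : Continuous g := hg.locallyLipschitz.continuous
  set U : Set (E × ℝ) := {p | g p.1 < p.2} with hU
  have hUopen : IsOpen U := by
    have : U = (fun p : E × ℝ => p.2 - g p.1) ⁻¹' Set.Ioi 0 := by
      ext p; simp [hU, sub_pos]
    rw [this]
    exact (continuous_snd.sub (hcont.comp continuous_fst)).isOpen_preimage _ isOpen_Ioi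
  have hUconv : Convex ℝ U := by
    rintro ⟨p1, p2⟩ hp ⟨q1, q2⟩ hq a b ha hb hab
    simp only [hU, Set.mem_setOf_eq, Prod.smul_mk, Prod.mk_add_mk, smul_eq_mul] at hp hq ⊢
    have h2 := hg.2 (Set.mem_univ p1) (Set.mem_univ q1) ha hb hab
    simp only [smul_eq_mul] at h2
    refine h2.trans_lt ?_
    rcases ha.eq_or_lt with rfl | ha'
    · simp only [zero_mul, zero_add] at hab ⊢
      nlinarith
    · nlinarith
  have hxU : (x, g x) ∉ U := by simp [hU]
  obtain ⟨f, hf⟩ := geometric_hahn_banach_open_point hUconv hUopen hxU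
  set c : ℝ := f (0, 1) with hc
  have hdecomp : ∀ (z : E) (t : ℝ), f (z, t) = f (z, 0) + t * c := by
    intro z t
    have : (z, t) = (z, (0 : ℝ)) + t • ((0 : E), (1 : ℝ)) := by
      simp [Prod.ext_iff]
    rw [this, map_add, map_smul]
    simp [hc]
  have hcneg : c < 0 := by
    have h1 : ((x, g x + 1) : E × ℝ) ∈ U := by simp [hU]
    have := hf _ h1
    rw [hdecomp x (g x + 1), hdecomp x (g x)] at this
    linarith
  have hcpos : (0 : ℝ) < -c := by linarith
  have hkey : ∀ z, f (z, 0) + g z * c ≤ f (x, 0) + g x * c := by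
    intro z
    by_contra hcon
    push_neg at hcon
    have hδpos : 0 < f (z, 0) + g z * c - (f (x, 0) + g x * c) := by linarith
    set δ := f (z, 0) + g z * c - (f (x, 0) + g x * c) with hδ
    have hεpos : 0 < δ / (-c) := div_pos hδpos hcpos
    have h1 : ((z, g z + δ / (-c)) : E × ℝ) ∈ U := by
      simp only [hU, Set.mem_setOf_eq]
      linarith
    have h2 := hf _ h1
    rw [hdecomp z _, hdecomp x _] at h2
    have h3 : (δ / (-c)) * c = -δ := by field_simp [hcneg.ne]
    have h4 : (g z + δ / (-c)) * c = g z * c - δ := by rw [add_mul, h3]; ring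
    linarith
  have hL : ∀ z, g x + (f (z - x, 0)) / (-c) ≤ g z := by
    intro z
    have h1 := hkey z
    have h2 : f (z - x, (0:ℝ)) = f (z, 0) - f (x, 0) := by
      have : ((z - x, (0:ℝ)) : E × ℝ) = (z, (0:ℝ)) - (x, (0:ℝ)) := by simp
      rw [this, map_sub]
    have h5 : (f (z, 0) - f (x, 0)) / (-c) ≤ g z - g x := by
      rw [div_le_iff₀ hcpos]; nlinarith
    rw [h2]; linarith
  set L : E →L[ℝ] ℝ := (-c)⁻¹ • (f.comp (ContinuousLinearMap.inl ℝ E ℝ)) with hLdef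
  refine ⟨(InnerProductSpace.toDual ℝ E).symm L, fun z => ?_⟩
  rw [InnerProductSpace.toDual_symm_apply]
  have hLeq : L (z - x) = f (z - x, 0) / (-c) := by
    simp [hLdef, div_eq_inv_mul]
  rw [hLeq]
  exact hL z

end FinDim

lemma coco_step {C : ℝ} (hC : 0 < C) (φ : E → ℝ) {A B : E} (x y : E)
    (hlow : ∀ z, φ x + ⟪A, z - x⟫_ℝ ≤ φ z)
    (hup : ∀ z, φ z ≤ φ y + ⟪B, z - y⟫_ℝ + C * ‖z - y‖ ^ 2) :
    φ x + ⟪A, y - x⟫_ℝ + 1 / (4 * C) * ‖A - B‖ ^ 2 ≤ φ y := by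
  set s : ℝ := 1 / (2 * C) with hs
  have hspos : 0 < s := by positivity
  set z : E := y + s • (A - B) with hz
  have h1 := hlow z
  have h2 := hup z
  have hzy : z - y = s • (A - B) := by rw [hz]; abel
  have hzx : z - x = (y - x) + s • (A - B) := by rw [hz]; abel
  have e1 : ⟪A, z - x⟫_ℝ = ⟪A, y - x⟫_ℝ + s * ⟪A, A - B⟫_ℝ := by
    rw [hzx, inner_add_right, real_inner_smul_right]
  have e2 : ⟪B, z - y⟫_ℝ = s * ⟪B, A - B⟫_ℝ := by
    rw [hzy, real_inner_smul_right]
  have e3 : ‖z - y‖ ^ 2 = s ^ 2 * ‖A - B‖ ^ 2 := by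
    rw [hzy, norm_smul, mul_pow, Real.norm_eq_abs, sq_abs]
  have e4 : ⟪A, A - B⟫_ℝ - ⟪B, A - B⟫_ℝ = ‖A - B‖ ^ 2 := by
    rw [← inner_sub_left, real_inner_self_eq_norm_sq]
  have e5 : s - C * s ^ 2 = 1 / (4 * C) := by
    rw [hs]; field_simp; ring
  have e4' : s * ⟪A, A - B⟫_ℝ - s * ⟪B, A - B⟫_ℝ = s * ‖A - B‖ ^ 2 := by
    rw [← mul_sub, e4]
  have e5' : s * ‖A - B‖ ^ 2 - C * (s ^ 2 * ‖A - B‖ ^ 2) = 1 / (4 * C) * ‖A - B‖ ^ 2 := by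
    calc s * ‖A - B‖ ^ 2 - C * (s ^ 2 * ‖A - B‖ ^ 2) = (s - C * s ^ 2) * ‖A - B‖ ^ 2 := by ring
      _ = 1 / (4 * C) * ‖A - B‖ ^ 2 := by rw [e5]
  rw [e1] at h1
  rw [e2, e3] at h2
  linarith [h1, h2, e4', e5']

lemma coco_main {C : ℝ} (hC : 0 < C) (φ : E → ℝ) {A B : E} (x y : E)
    (hlowx : ∀ z, φ x + ⟪A, z - x⟫_ℝ ≤ φ z)
    (hlowy : ∀ z, φ y + ⟪B, z - y⟫_ℝ ≤ φ z)
    (hupx : ∀ z, φ z ≤ φ x + ⟪A, z - x⟫_ℝ + C * ‖z - x‖ ^ 2)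
    (hupy : ∀ z, φ z ≤ φ y + ⟪B, z - y⟫_ℝ + C * ‖z - y‖ ^ 2) :
    1 / (2 * C) * ‖A - B‖ ^ 2 ≤ ⟪A - B, x - y⟫_ℝ := by
  have h1 := coco_step hC φ x y hlowx hupy
  have h2 := coco_step hC φ y x hlowy hupx
  have e1 : ‖B - A‖ = ‖A - B‖ := norm_sub_rev _ _
  have e2 : ⟪A - B, x - y⟫_ℝ = -⟪A, y - x⟫_ℝ - ⟪B, x - y⟫_ℝ := by
    rw [inner_sub_left]
    rw [show (y - x : E) = -(x - y) by abel, inner_neg_right]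
    ring
  rw [e1] at h2
  have e3 : 1 / (4 * C) + 1 / (4 * C) = 1 / (2 * C) := by field_simp; ring
  nlinarith [h1, h2, e2, e3]

/-- The shifted support bounds for `u + (C/2)‖·‖²` and `(C/2)‖·‖² − u`. -/
lemma bounds_shift {C : ℝ} (u : E → ℝ) (p x : E)
    (hl : ∀ z, -(C / 2 * ‖z - x‖ ^ 2) ≤ u z - u x - ⟪p, z - x⟫_ℝ)
    (hu : ∀ z, u z - u x - ⟪p, z - x⟫_ℝ ≤ C / 2 * ‖z - x‖ ^ 2) :
    (∀ z, (u x + C / 2 * ‖x‖ ^ 2) + ⟪p + C • x, z - x⟫_ℝ ≤ u z + C / 2 * ‖z‖ ^ 2) ∧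
    (∀ z, u z + C / 2 * ‖z‖ ^ 2 ≤ (u x + C / 2 * ‖x‖ ^ 2) + ⟪p + C • x, z - x⟫_ℝ
        + C * ‖z - x‖ ^ 2) ∧
    (∀ z, (C / 2 * ‖x‖ ^ 2 - u x) + ⟪C • x - p, z - x⟫_ℝ ≤ C / 2 * ‖z‖ ^ 2 - u z) ∧
    (∀ z, C / 2 * ‖z‖ ^ 2 - u z ≤ (C / 2 * ‖x‖ ^ 2 - u x) + ⟪C • x - p, z - x⟫_ℝ
        + C * ‖z - x‖ ^ 2) := by
  have hid : ∀ z : E, C / 2 * ‖z‖ ^ 2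
      = C / 2 * ‖x‖ ^ 2 + C * ⟪x, z - x⟫_ℝ + C / 2 * ‖z - x‖ ^ 2 := by
    intro z
    have : ‖z‖ ^ 2 = ‖x‖ ^ 2 + 2 * ⟪x, z - x⟫_ℝ + ‖z - x‖ ^ 2 := by
      rw [show z = x + (z - x) by abel] 
      rw [norm_add_sq_real]
      congr 2 <;> rw [show x + (z - x) - x = z - x by abel]
    rw [this]; ring
  have hinner1 : ∀ z : E, ⟪p + C • x, z - x⟫_ℝ = ⟪p, z - x⟫_ℝ + C * ⟪x, z - x⟫_ℝ := by
    intro z; rw [inner_add_left, real_inner_smul_left]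
  have hinner2 : ∀ z : E, ⟪C • x - p, z - x⟫_ℝ = C * ⟪x, z - x⟫_ℝ - ⟪p, z - x⟫_ℝ := by
    intro z; rw [inner_sub_left, real_inner_smul_left]
  refine ⟨fun z => ?_, fun z => ?_, fun z => ?_, fun z => ?_⟩
  · have h := hl z; rw [hinner1 z]; linarith [hid z]
  · have h := hu z; rw [hinner1 z]; linarith [hid z]
  · have h := hu z; rw [hinner2 z]; linarith [hid z]
  · have h := hl z; rw [hinner2 z]; linarith [hid z]

/-- The sharp Lipschitz estimate for the "gradient" `P` via co-coercivity. -/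
lemma lip_est {C : ℝ} (hC : 0 < C) (u : E → ℝ) (P : E → E)
    (hl : ∀ x z, -(C / 2 * ‖z - x‖ ^ 2) ≤ u z - u x - ⟪P x, z - x⟫_ℝ)
    (hu : ∀ x z, u z - u x - ⟪P x, z - x⟫_ℝ ≤ C / 2 * ‖z - x‖ ^ 2) (x y : E) :
    ‖P x - P y‖ ≤ C * ‖x - y‖ := by
  obtain ⟨hG1x, hG2x, hF1x, hF2x⟩ := bounds_shift u (P x) x (hl x) (hu x)
  obtain ⟨hG1y, hG2y, hF1y, hF2y⟩ := bounds_shift u (P y) y (hl y) (hu y)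
  have hG := coco_main hC (fun w => u w + C / 2 * ‖w‖ ^ 2) x y hG1x hG1y hG2x hG2y
  have hF := coco_main hC (fun w => C / 2 * ‖w‖ ^ 2 - u w) x y hF1x hF1y hF2x hF2y
  set e : E := P x - P y with he
  set d : E := x - y with hd
  have hA : (P x + C • x) - (P y + C • y) = e + C • d := by
    rw [he, hd, smul_sub]; abel
  have hA' : (C • x - P x) - (C • y - P y) = C • d - e := by
    rw [he, hd, smul_sub]; abel
  rw [hA] at hG
  rw [hA'] at hF
  have n1 : ‖e + C • d‖ ^ 2 = ‖e‖ ^ 2 + 2 * (C * ⟪e, d⟫_ℝ) + C ^ 2 * ‖d‖ ^ 2 := by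
    rw [norm_add_sq_real, real_inner_smul_right, norm_smul, mul_pow, Real.norm_eq_abs, sq_abs]
  have n2 : ‖C • d - e‖ ^ 2 = C ^ 2 * ‖d‖ ^ 2 - 2 * (C * ⟪e, d⟫_ℝ) + ‖e‖ ^ 2 := by
    rw [norm_sub_sq_real, real_inner_smul_left, norm_smul, mul_pow, Real.norm_eq_abs, sq_abs,
      real_inner_comm d e]
  have i1 : ⟪e + C • d, d⟫_ℝ = ⟪e, d⟫_ℝ + C * ‖d‖ ^ 2 := by
    rw [inner_add_left, real_inner_smul_left, real_inner_self_eq_norm_sq]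
  have i2 : ⟪C • d - e, d⟫_ℝ = C * ‖d‖ ^ 2 - ⟪e, d⟫_ℝ := by
    rw [inner_sub_left, real_inner_smul_left, real_inner_self_eq_norm_sq]
  rw [n1, i1] at hG
  rw [n2, i2] at hF
  -- adding the two co-coercivity estimates
  have hsum : 1 / (2 * C) * (‖e‖ ^ 2 + ‖e‖ ^ 2 + 2 * C ^ 2 * ‖d‖ ^ 2) ≤ 2 * C * ‖d‖ ^ 2 := by
    ring_nf at hG hF ⊢
    linarith [hG, hF]
  have h2C : (0 : ℝ) < 2 * C := by linarith
  have heq : 2 * C * (1 / (2 * C) * (‖e‖ ^ 2 + ‖e‖ ^ 2 + 2 * C ^ 2 * ‖d‖ ^ 2))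
      = ‖e‖ ^ 2 + ‖e‖ ^ 2 + 2 * C ^ 2 * ‖d‖ ^ 2 := by
    field_simp
  have hmul := mul_le_mul_of_nonneg_left hsum h2C.le
  rw [heq] at hmul
  -- hence ‖e‖² ≤ C²‖d‖²
  have hsq : ‖e‖ ^ 2 ≤ C ^ 2 * ‖d‖ ^ 2 := by nlinarith [hmul]
  nlinarith [hsq, norm_nonneg e, norm_nonneg d, mul_nonneg hC.le (norm_nonneg d)]

end Aux

section Taylor

variable {E : Type*} [NormedAddCommGroup E] [InnerProductSpace ℝ E] [FiniteDimensional ℝ E]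

/-- From semiconcavity and semiconvexity, a two-sided quadratic Taylor bound with a
common "gradient" vector at every point. -/
lemma exists_taylor (C : ℝ) (hC : 0 ≤ C) (u : E → ℝ)
    (hconc : Semiconcave C u) (hconv : Semiconvex C u) :
    ∃ P : E → E, (∀ x z, -(C / 2 * ‖z - x‖ ^ 2) ≤ u z - u x - ⟪P x, z - x⟫_ℝ) ∧
      (∀ x z, u z - u x - ⟪P x, z - x⟫_ℝ ≤ C / 2 * ‖z - x‖ ^ 2) := by
  have hg : ConvexOn ℝ Set.univ (fun z : E => u z + C / 2 * ‖z‖ ^ 2) := by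
    have h := hconv.neg
    convert h using 1
    · rfl
    · rfl
    funext z
    simp only [Pi.neg_apply]
    ring
  have hf : ConvexOn ℝ Set.univ (fun z : E => C / 2 * ‖z‖ ^ 2 - u z) := by
    have h := hconc.neg
    convert h using 1
    · rfl
    · rfl
    funext z
    simp only [Pi.neg_apply]
    ring
  have hid : ∀ x z : E, C / 2 * ‖z‖ ^ 2
      = C / 2 * ‖x‖ ^ 2 + C * ⟪x, z - x⟫_ℝ + C / 2 * ‖z - x‖ ^ 2 := by
    intro x z
    have : ‖z‖ ^ 2 = ‖x‖ ^ 2 + 2 * ⟪x, z - x⟫_ℝ + ‖z - x‖ ^ 2 := by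
      rw [show z = x + (z - x) by abel]
      rw [norm_add_sq_real]
      congr 2 <;> rw [show x + (z - x) - x = z - x by abel]
    rw [this]; ring
  have hmain : ∀ x : E, ∃ a : E,
      (∀ z, -(C / 2 * ‖z - x‖ ^ 2) ≤ u z - u x - ⟪a, z - x⟫_ℝ) ∧
      (∀ z, u z - u x - ⟪a, z - x⟫_ℝ ≤ C / 2 * ‖z - x‖ ^ 2) := by
    intro x
    obtain ⟨v, hv⟩ := exists_subgradient' _ hg x
    obtain ⟨w, hw⟩ := exists_subgradient' _ hf x
    set a : E := v - C • x with ha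
    set b : E := C • x - w with hb
    have hlow : ∀ z, -(C / 2 * ‖z - x‖ ^ 2) ≤ u z - u x - ⟪a, z - x⟫_ℝ := by
      intro z
      have h1 := hv z
      have h2 : ⟪a, z - x⟫_ℝ = ⟪v, z - x⟫_ℝ - C * ⟪x, z - x⟫_ℝ := by
        rw [ha, inner_sub_left, real_inner_smul_left]
      rw [h2]
      linarith [hid x z]
    have hup : ∀ z, u z - u x - ⟪b, z - x⟫_ℝ ≤ C / 2 * ‖z - x‖ ^ 2 := by
      intro z
      have h1 := hw z
      have h2 : ⟪b, z - x⟫_ℝ = C * ⟪x, z - x⟫_ℝ - ⟪w, z - x⟫_ℝ := by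
        rw [hb, inner_sub_left, real_inner_smul_left]
      rw [h2]
      linarith [hid x z]
    have hab : a = b := by
      have hdiff : ∀ h : E, ⟪a - b, h⟫_ℝ ≤ C * ‖h‖ ^ 2 := by
        intro h
        have h1 := hlow (x + h)
        have h2 := hup (x + h)
        rw [show x + h - x = h by abel] at h1 h2
        rw [inner_sub_left]
        linarith
      have hC1 : (0 : ℝ) < C + 1 := by linarith
      have ht := hdiff ((1 / (C + 1)) • (a - b))
      rw [real_inner_smul_right, norm_smul, mul_pow, Real.norm_eq_abs, sq_abs,
        real_inner_self_eq_norm_sq] at ht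
      have hsq0 : ‖a - b‖ ^ 2 ≤ 0 := by
        have hmul := mul_le_mul_of_nonneg_left ht (by positivity : (0:ℝ) ≤ (C + 1) ^ 2)
        have e1 : (C + 1) ^ 2 * (1 / (C + 1) * ‖a - b‖ ^ 2) = (C + 1) * ‖a - b‖ ^ 2 := by
          field_simp <;> ring
        have e2 : (C + 1) ^ 2 * (C * ((1 / (C + 1)) ^ 2 * ‖a - b‖ ^ 2))
            = C * ‖a - b‖ ^ 2 := by
          field_simp <;> ring
        rw [e1, e2] at hmul
        nlinarith [hmul]
      have : a - b = 0 := by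
        rw [← norm_eq_zero]
        nlinarith [norm_nonneg (a - b), hsq0]
      exact sub_eq_zero.mp this
    exact ⟨a, hlow, hab ▸ hup⟩
  choose P hP using hmain
  exact ⟨P, fun x => (hP x).1, fun x => (hP x).2⟩

end Taylor


/-- A function which is both `C`-semiconcave and `C`-semiconvex is `C¹,¹`: it is
everywhere differentiable with `C`-Lipschitz derivative. -/
theorem semiconcave_semiconvex_C11
    {E : Type*} [NormedAddCommGroup E] [InnerProductSpace ℝ E] [FiniteDimensional ℝ E]
    (C : ℝ) (hC : 0 ≤ C) (u : E → ℝ)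
    (hconc : Semiconcave C u) (hconv : Semiconvex C u) :
    (∀ x : E, DifferentiableAt ℝ u x) ∧
    LipschitzWith (Real.toNNReal C) (fun x => fderiv ℝ u x) := by
  obtain ⟨P, hPl, hPu⟩ := exists_taylor C hC u hconc hconv
  have hderiv : ∀ x : E, HasFDerivAt u (innerSL ℝ (P x)) x := by
    intro x
    rw [hasFDerivAt_iff_isLittleO_nhds_zero, Asymptotics.isLittleO_iff]
    intro ε hε
    have hδpos : (0 : ℝ) < ε / (C / 2 + 1) := by positivity
    filter_upwards [Metric.ball_mem_nhds (0 : E) hδpos] with h hh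
    rw [Metric.mem_ball, dist_zero_right] at hh
    have h1 := hPl x (x + h)
    have h2 := hPu x (x + h)
    rw [show x + h - x = h by abel] at h1 h2
    have h3 : |u (x + h) - u x - ⟪P x, h⟫_ℝ| ≤ C / 2 * ‖h‖ ^ 2 := abs_le.mpr ⟨h1, h2⟩
    have h4 : C / 2 * (ε / (C / 2 + 1)) ≤ ε := by
      rw [mul_div_assoc', div_le_iff₀ (by positivity : (0 : ℝ) < C / 2 + 1)]
      nlinarith [hε.le, hC]
    have h5 : C / 2 * ‖h‖ ≤ ε := by
      have := mul_le_mul_of_nonneg_left hh.le (by positivity : (0 : ℝ) ≤ C / 2)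
      linarith
    have hin : (innerSL ℝ (P x)) h = ⟪P x, h⟫_ℝ := rfl
    rw [hin, Real.norm_eq_abs]
    nlinarith [h3, h5, norm_nonneg h]
  refine ⟨fun x => (hderiv x).differentiableAt, ?_⟩
  have hfd : ∀ x : E, fderiv ℝ u x = innerSL ℝ (P x) := fun x => (hderiv x).fderiv
  rw [lipschitzWith_iff_dist_le_mul]
  intro x y
  rw [hfd x, hfd y, dist_eq_norm, dist_eq_norm, ← map_sub, innerSL_apply_norm,
    Real.coe_toNNReal C hC]
  -- goal : ‖P x - P y‖ ≤ C * ‖x - y‖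
  rcases eq_or_ne x y with rfl | hxy
  · simp
  refine le_of_forall_gt_imp_ge_of_dense fun c hc => ?_
  have hd0 : (0 : ℝ) < ‖x - y‖ := by
    rw [norm_pos_iff]; exact sub_ne_zero.mpr hxy
  set C' : ℝ := c / ‖x - y‖ with hC'
  have hCC' : C < C' := by rw [hC', lt_div_iff₀ hd0]; linarith
  have hC'pos : 0 < C' := lt_of_le_of_lt hC hCC'
  have hl' : ∀ a z : E, -(C' / 2 * ‖z - a‖ ^ 2) ≤ u z - u a - ⟪P a, z - a⟫_ℝ :=
    fun a z => le_trans
      (by nlinarith [sq_nonneg ‖z - a‖, hCC'.le] :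
        -(C' / 2 * ‖z - a‖ ^ 2) ≤ -(C / 2 * ‖z - a‖ ^ 2))
      (hPl a z)
  have hu' : ∀ a z : E, u z - u a - ⟪P a, z - a⟫_ℝ ≤ C' / 2 * ‖z - a‖ ^ 2 :=
    fun a z => le_trans (hPu a z)
      (by nlinarith [sq_nonneg ‖z - a‖, hCC'.le])
  have hest := lip_est hC'pos u P hl' hu' x y
  rw [hC', div_mul_cancel₀ c hd0.ne'] at hest
  exact hest
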